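/- Let G be a digraph on vertex set V. Then βG is proper (βs and βt are jointly injective on βE) if and only if G is proper (s × t : E → V × V is injective) and the adjacency relation of G, regarded as a subset of V × V, is a small relation. -/

import Mathlib

def Adj {V E : Type*} (s t : E → V) (x y : V) : Prop := ∃ e, s e = x ∧ t e = y

def IsSmall {X Y : Type*} (ρ : Set (X × Y)) : Prop :=
  ∀ Q ⊆ ρ, ∃ (n : ℕ) (A : Fin n → Set X) (B : Fin n → Set Y),
    Q = ρ ∩ ⋃ i, A i ×ˢ B i

namespace BetaProper

variable {X Y : Type*}

/-- finite unions of rectangles -/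
def FU (r : Set (X × Y)) : Prop :=
  ∃ S : Set (Set X × Set Y), S.Finite ∧ r = ⋃ c ∈ S, c.1 ×ˢ c.2

lemma FU_rect (A : Set X) (B : Set Y) : FU (A ×ˢ B) :=
  ⟨{(A, B)}, Set.finite_singleton _, by simp⟩

lemma FU_univ : FU (Set.univ : Set (X × Y)) := by
  have := FU_rect (Set.univ : Set X) (Set.univ : Set Y)
  simpa using this

lemma FU_union {r₁ r₂ : Set (X × Y)} (h₁ : FU r₁) (h₂ : FU r₂) : FU (r₁ ∪ r₂) := by
  obtain ⟨S₁, hS₁, rfl⟩ := h₁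
  obtain ⟨S₂, hS₂, rfl⟩ := h₂
  exact ⟨S₁ ∪ S₂, hS₁.union hS₂, by rw [Set.biUnion_union]⟩

lemma FU_inter {r₁ r₂ : Set (X × Y)} (h₁ : FU r₁) (h₂ : FU r₂) : FU (r₁ ∩ r₂) := by
  obtain ⟨S₁, hS₁, rfl⟩ := h₁
  obtain ⟨S₂, hS₂, rfl⟩ := h₂
  refine ⟨(fun c : (Set X × Set Y) × (Set X × Set Y) =>
      (c.1.1 ∩ c.2.1, c.1.2 ∩ c.2.2)) '' (S₁ ×ˢ S₂), (hS₁.prod hS₂).image _, ?_⟩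
  rw [Set.biUnion_image]
  ext p
  simp only [Set.mem_inter_iff, Set.mem_iUnion, Set.mem_prod, Set.mem_inter_iff]
  constructor
  · rintro ⟨⟨c₁, h₁, hp₁⟩, ⟨c₂, h₂, hp₂⟩⟩
    exact ⟨(c₁, c₂), ⟨h₁, h₂⟩, ⟨hp₁.1, hp₂.1⟩, ⟨hp₁.2, hp₂.2⟩⟩
  · rintro ⟨⟨c₁, c₂⟩, ⟨h₁, h₂⟩, ⟨ha, hb⟩, ⟨hc, hd⟩⟩
    exact ⟨⟨c₁, h₁, ha, hc⟩, ⟨c₂, h₂, hb, hd⟩⟩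

lemma FU_compl {r : Set (X × Y)} (h : FU r) : FU rᶜ := by
  obtain ⟨S, hS, rfl⟩ := h
  refine Set.Finite.induction_on (motive := fun S _ => FU (⋃ c ∈ S, c.1 ×ˢ c.2)ᶜ) _ hS
    (by simpa using FU_univ) ?_
  intro a S _ _ ih
  rw [Set.biUnion_insert, Set.compl_union]
  refine FU_inter ?_ ih
  rw [Set.compl_prod_eq_union]
  exact FU_union (FU_rect _ _) (FU_rect _ _)

lemma FU_biUnion {ι : Type*} {S : Set ι} (hS : S.Finite) {f : ι → Set (X × Y)}
    (h : ∀ i ∈ S, FU (f i)) : FU (⋃ i ∈ S, f i) := by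
  refine Set.Finite.induction_on
    (motive := fun S _ => (∀ i ∈ S, FU (f i)) → FU (⋃ i ∈ S, f i)) _ hS
    (fun _ => by simpa using FU_compl FU_univ) ?_ h
  intro a S _ _ ih h'
  rw [Set.biUnion_insert]
  exact FU_union (h' a (Set.mem_insert _ _))
    (ih fun i hi => h' i (Set.mem_insert_of_mem _ hi))

lemma FU_biInter {ι : Type*} {S : Set ι} (hS : S.Finite) {f : ι → Set (X × Y)}
    (h : ∀ i ∈ S, FU (f i)) : FU (⋂ i ∈ S, f i) := by
  refine Set.Finite.induction_on
    (motive := fun S _ => (∀ i ∈ S, FU (f i)) → FU (⋂ i ∈ S, f i)) _ hS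
    (fun _ => by simpa using FU_univ) ?_ h
  intro a S _ _ ih h'
  rw [Set.biInter_insert]
  exact FU_inter (h' a (Set.mem_insert _ _))
    (ih fun i hi => h' i (Set.mem_insert_of_mem _ hi))

lemma isSmall_iff_FU (ρ : Set (X × Y)) :
    IsSmall ρ ↔ ∀ Q ⊆ ρ, ∃ r, FU r ∧ Q = ρ ∩ r := by
  constructor
  · intro h Q hQ
    obtain ⟨n, A, B, hq⟩ := h Q hQ
    refine ⟨⋃ i, A i ×ˢ B i, ?_, hq⟩
    refine ⟨Set.range (fun i => (A i, B i)), Set.finite_range _, ?_⟩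
    rw [Set.biUnion_range]
  · intro h Q hQ
    obtain ⟨r, ⟨S, hS, rfl⟩, hq⟩ := h Q hQ
    obtain ⟨n, f, hf⟩ := hS.fin_embedding
    refine ⟨n, fun i => (f i).1, fun i => (f i).2, ?_⟩
    rw [hq, ← hf, Set.biUnion_range]

end BetaProper
namespace BetaProper

variable {X Y : Type*}

lemma key (ρ Q : Set (X × Y)) (hQ : Q ⊆ ρ)
    (h : ¬ ∃ r, FU r ∧ Q = ρ ∩ r) (F : Set (Set X × Set Y)) (hF : F.Finite) :
    ∃ p ∈ Q, ∃ q ∈ ρ \ Q, ∀ c ∈ F, ((p ∈ c.1 ×ˢ c.2) ↔ (q ∈ c.1 ×ˢ c.2)) := by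
  classical
  by_contra hc
  push_neg at hc
  apply h
  set T : X × Y → Set (Set X × Set Y) := fun p => {c ∈ F | p ∈ c.1 ×ˢ c.2} with hT
  set A : Set (Set X × Set Y) → Set (X × Y) := fun S =>
    (⋂ c ∈ S, c.1 ×ˢ c.2) ∩ (⋂ c ∈ F \ S, (c.1 ×ˢ c.2)ᶜ) with hA
  have hmem_atom : ∀ p q : X × Y, q ∈ A (T p) ↔ ∀ c ∈ F, (p ∈ c.1 ×ˢ c.2 ↔ q ∈ c.1 ×ˢ c.2) := by
    intro p q
    simp only [hA, hT, Set.mem_inter_iff, Set.mem_iInter, Set.mem_diff, Set.mem_setOf_eq,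
      Set.mem_compl_iff]
    constructor
    · rintro ⟨h1, h2⟩ c hcF
      constructor
      · intro hp; exact h1 c ⟨hcF, hp⟩
      · intro hq; by_contra hp; exact h2 c ⟨hcF, fun hh => hp hh.2⟩ hq
    · intro hiff
      constructor
      · rintro c ⟨hcF, hp⟩; exact (hiff c hcF).1 hp
      · rintro c ⟨hcF, hp⟩ hq; exact hp ⟨hcF, (hiff c hcF).2 hq⟩
  refine ⟨⋃ S ∈ T '' Q, A S, ?_, ?_⟩
  · have hfin : (T '' Q).Finite := by
      refine (hF.finite_subsets).subset ?_
      rintro S ⟨p, _, rfl⟩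
      exact Set.sep_subset _ _
    refine FU_biUnion hfin ?_
    intro S hS
    refine FU_inter (FU_biInter ?_ fun c _ => FU_rect _ _)
      (FU_biInter hF.diff fun c _ => FU_compl (FU_rect _ _))
    obtain ⟨p, _, rfl⟩ := hS
    exact hF.subset (Set.sep_subset _ _)
  · ext q
    simp only [Set.mem_inter_iff, Set.biUnion_image, Set.mem_iUnion]
    constructor
    · intro hq
      refine ⟨hQ hq, q, hq, (hmem_atom q q).2 fun c _ => Iff.rfl⟩
    · rintro ⟨hqρ, p, hpQ, hqA⟩
      by_contra hqQ
      obtain ⟨c, hcF, hne⟩ := hc p hpQ q ⟨hqρ, hqQ⟩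
      have hiff := (hmem_atom p q).1 hqA c hcF
      tauto

end BetaProper
theorem beta_proper_iff {V E : Type*} (s t : E → V) :
    Function.Injective
        (fun ξ : Ultrafilter E => (Ultrafilter.map s ξ, Ultrafilter.map t ξ)) ↔
      Function.Injective (fun e : E => (s e, t e)) ∧
        IsSmall {p : V × V | Adj s t p.1 p.2} := by
  classical
  open BetaProper in
  set f : E → V × V := fun e => (s e, t e) with hf
  have hρ : {p : V × V | Adj s t p.1 p.2} = Set.range f := by
    ext ⟨x, y⟩
    simp [Adj, hf, Prod.ext_iff]
  rw [hρ]
  constructor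
  · intro H
    have hinj : Function.Injective f := by
      intro e e' h
      have h' : (fun ξ : Ultrafilter E => (Ultrafilter.map s ξ, Ultrafilter.map t ξ)) (pure e)
          = (fun ξ : Ultrafilter E => (Ultrafilter.map s ξ, Ultrafilter.map t ξ)) (pure e') := by
        simp only [Ultrafilter.map_pure]
        have h1 : s e = s e' := congrArg Prod.fst h
        have h2 : t e = t e' := congrArg Prod.snd h
        rw [h1, h2]
      exact Ultrafilter.pure_injective (H h')
    refine ⟨hinj, ?_⟩
    rw [BetaProper.isSmall_iff_FU]
    intro Q hQ
    by_contra hno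
    -- build two distinct ultrafilters on V × V containing range f with equal marginals
    set Z : Set ((V × V) × (V × V)) := Q ×ˢ (Set.range f \ Q) with hZdef
    set D : Set V → Set V → Set ((V × V) × (V × V)) := fun A B =>
      {pq | pq.1 ∈ A ×ˢ B ↔ pq.2 ∈ A ×ˢ B} with hDdef
    set L : Set (Set ((V × V) × (V × V))) := {Z} ∪ {z | ∃ A B, z = D A B} with hLdef
    have hNeBot : (Filter.generate L).NeBot := by
      rw [Filter.generate_neBot_iff]
      intro tt htt httfin
      set c : Set ((V × V) × (V × V)) → Set V × Set V := fun z =>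
        if h : ∃ A B, z = D A B then (h.choose, h.choose_spec.choose) else (∅, ∅) with hcdef
      obtain ⟨p, hp, q, hq, hag⟩ := BetaProper.key (Set.range f) Q hQ hno (c '' tt)
        (httfin.image c)
      refine ⟨(p, q), ?_⟩
      intro z hz
      rcases htt hz with hz1 | hz2
      · rw [Set.mem_singleton_iff] at hz1
        subst hz1
        exact ⟨hp, hq⟩
      · have hcz : z = D (c z).1 (c z).2 := by
          have hz2' : ∃ A B, z = D A B := hz2
          simp only [hcdef]
          split
          · rename_i hh
            exact hh.choose_spec.choose_spec
          · rename_i hh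
            exact absurd hz2' hh
        rw [hcz]
        exact hag (c z) (Set.mem_image_of_mem c hz)
    obtain ⟨θ, hθ⟩ := Ultrafilter.exists_le (Filter.generate L)
    have hmemθ : ∀ z ∈ L, z ∈ θ := fun z hz => hθ (Filter.mem_generate_of_mem hz)
    have hZθ : Z ∈ θ := hmemθ Z (Or.inl rfl)
    have hDθ : ∀ A B, D A B ∈ θ := fun A B => hmemθ _ (Or.inr ⟨A, B, rfl⟩)
    set μ : Ultrafilter (V × V) := Ultrafilter.map Prod.fst θ with hμdef
    set ν : Ultrafilter (V × V) := Ultrafilter.map Prod.snd θ with hνdef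
    have hQμ : Q ∈ μ := by
      rw [hμdef, Ultrafilter.mem_map]
      exact Filter.mem_of_superset hZθ (fun pq hpq => hpq.1)
    have hQν : Set.range f \ Q ∈ ν := by
      rw [hνdef, Ultrafilter.mem_map]
      exact Filter.mem_of_superset hZθ (fun pq hpq => hpq.2)
    have hrμ : Set.range f ∈ μ := Filter.mem_of_superset hQμ hQ
    have hrν : Set.range f ∈ ν := Filter.mem_of_superset hQν Set.diff_subset
    have hμν : μ ≠ ν := by
      intro h
      have h1 : Q ∩ (Set.range f \ Q) ∈ ν := Filter.inter_mem (h ▸ hQμ) hQν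
      rw [Set.inter_diff_self] at h1
      exact Filter.empty_notMem (ν : Filter (V × V)) h1
    have agree : ∀ A : Set V, ∀ B : Set V,
        (Prod.fst ⁻¹' (A ×ˢ B) ∈ θ ↔ Prod.snd ⁻¹' (A ×ˢ B) ∈ θ) := by
      intro A B
      have hd := hDθ A B
      constructor <;> intro hx
      · refine Filter.mem_of_superset (Filter.inter_mem hx hd) ?_
        rintro pq ⟨h1, h2⟩
        exact h2.1 h1
      · refine Filter.mem_of_superset (Filter.inter_mem hx hd) ?_
        rintro pq ⟨h1, h2⟩
        exact h2.2 h1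
    have h1 : Ultrafilter.map Prod.fst μ = Ultrafilter.map Prod.fst ν := by
      rw [hμdef, hνdef, Ultrafilter.map_map, Ultrafilter.map_map]
      apply Ultrafilter.ext
      intro A
      rw [Ultrafilter.mem_map, Ultrafilter.mem_map]
      have h' := agree A Set.univ
      rw [Set.prod_univ] at h'
      exact h' 
    have h2 : Ultrafilter.map Prod.snd μ = Ultrafilter.map Prod.snd ν := by
      rw [hμdef, hνdef, Ultrafilter.map_map, Ultrafilter.map_map]
      apply Ultrafilter.ext
      intro B
      rw [Ultrafilter.mem_map, Ultrafilter.mem_map]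
      have h' := agree Set.univ B
      rw [Set.univ_prod] at h'
      exact h' 
    set ξ : Ultrafilter E := μ.comap hinj hrμ with hξdef
    set η : Ultrafilter E := ν.comap hinj hrν with hηdef
    have hmapξ : Ultrafilter.map f ξ = μ := by
      apply Ultrafilter.coe_injective
      rw [Ultrafilter.coe_map, hξdef, Ultrafilter.coe_comap]
      exact Filter.map_comap_of_mem hrμ
    have hmapη : Ultrafilter.map f η = ν := by
      apply Ultrafilter.coe_injective
      rw [Ultrafilter.coe_map, hηdef, Ultrafilter.coe_comap]
      exact Filter.map_comap_of_mem hrν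
    have hs : Ultrafilter.map s ξ = Ultrafilter.map s η := by
      have : ∀ ζ : Ultrafilter E, Ultrafilter.map s ζ
          = Ultrafilter.map Prod.fst (Ultrafilter.map f ζ) := by
        intro ζ
        rw [Ultrafilter.map_map]
        rfl
      rw [this ξ, this η, hmapξ, hmapη, h1]
    have ht : Ultrafilter.map t ξ = Ultrafilter.map t η := by
      have : ∀ ζ : Ultrafilter E, Ultrafilter.map t ζ
          = Ultrafilter.map Prod.snd (Ultrafilter.map f ζ) := by
        intro ζ
        rw [Ultrafilter.map_map]
        rfl
      rw [this ξ, this η, hmapξ, hmapη, h2]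
    have : ξ = η := H (by rw [Prod.mk.injEq]; exact ⟨hs, ht⟩)
    exact hμν (by rw [← hmapξ, ← hmapη, this])
  · rintro ⟨hinj, hsmall⟩
    rw [BetaProper.isSmall_iff_FU] at hsmall
    intro ξ η h
    have hs : Ultrafilter.map s ξ = Ultrafilter.map s η := congrArg Prod.fst h
    have ht : Ultrafilter.map t ξ = Ultrafilter.map t η := congrArg Prod.snd h
    by_contra hne
    obtain ⟨S, hSξ, hSη⟩ : ∃ S : Set E, S ∈ ξ ∧ S ∉ η := by
      by_contra hall
      push_neg at hall
      apply hne
      apply Ultrafilter.ext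
      intro S
      constructor
      · exact hall S
      · intro hSη
        by_contra hSξ
        exact Ultrafilter.compl_mem_iff_notMem.mp
          (hall Sᶜ (Ultrafilter.compl_mem_iff_notMem.mpr hSξ)) hSη
    obtain ⟨r, ⟨T, hT, rfl⟩, hQ⟩ := hsmall (f '' S) (Set.image_subset_range f S)
    have hSeq : S = ⋃ c ∈ T, (s ⁻¹' c.1 ∩ t ⁻¹' c.2) := by
      have h1 : S = f ⁻¹' (f '' S) := (hinj.preimage_image S).symm
      rw [h1, hQ]
      ext e
      simp only [Set.mem_preimage, Set.mem_inter_iff, Set.mem_range, Set.mem_iUnion,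
        Set.mem_prod]
      constructor
      · rintro ⟨-, c, hcT, h1, h2⟩
        exact ⟨c, hcT, h1, h2⟩
      · rintro ⟨c, hcT, h1, h2⟩
        exact ⟨⟨e, rfl⟩, c, hcT, h1, h2⟩
    have hSξ' := hSξ
    rw [hSeq, Ultrafilter.finite_biUnion_mem_iff hT] at hSξ'
    obtain ⟨c, hcT, hc⟩ := hSξ'
    have h1 : s ⁻¹' c.1 ∈ ξ := Filter.mem_of_superset hc Set.inter_subset_left
    have h2 : t ⁻¹' c.2 ∈ ξ := Filter.mem_of_superset hc Set.inter_subset_right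
    have h1' : s ⁻¹' c.1 ∈ η := by
      have hm : c.1 ∈ Ultrafilter.map s ξ := Ultrafilter.mem_map.mpr h1
      rw [hs] at hm
      exact Ultrafilter.mem_map.mp hm
    have h2' : t ⁻¹' c.2 ∈ η := by
      have hm : c.2 ∈ Ultrafilter.map t ξ := Ultrafilter.mem_map.mpr h2
      rw [ht] at hm
      exact Ultrafilter.mem_map.mp hm
    apply hSη
    rw [hSeq]
    exact Filter.mem_of_superset (Filter.inter_mem h1' h2')
      (Set.subset_biUnion_of_mem (u := fun c => s ⁻¹' c.1 ∩ t ⁻¹' c.2) hcT)
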